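/- Let k be a field and take X = Bool; in F := FreeLieAlgebra k (Bool ⊕ Bool) write x̄ := ι(Sum.inl true), ȳ := ι(Sum.inl false), ẋ := ι(Sum.inr true), ẏ := ι(Sum.inr false), and let φ : F → F be the unique Lie algebra homomorphism with φ(x̄) = x̄, φ(ȳ) = ȳ, φ(ẋ) = x̄, φ(ẏ) = ȳ. Let V₂ be the smallest k-submodule of F containing ẋ, ẏ and closed under a, b ∈ V₂ ⇒ ⁅φ(a), b⁆, ⁅a, φ(b)⁆ ∈ V₂. Let f := ⁅ẋ, ȳ⁆ + ⁅ẏ, x̄⁆ + ẏ, and let J be the smallest k-submodule of F containing f such that for all j ∈ J and v ∈ V₂: ⁅φ(v), j⁆, ⁅j, φ(v)⁆, ⁅v, φ(j)⁆, ⁅φ(j), v⁆ ∈ J. Define w₀ := ẋ and wₙ₊₁ := ⁅wₙ, x̄⁆. Then J ⊆ V₂, and the images of ẏ together with all wₙ (n ≥ 0) form a k-basis of the quotient module V₂ / J. -/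

import Mathlib

namespace Stmt15

variable (k : Type*) [Field k]

/-- The free Lie algebra on two copies of `{x, y}` (encoded as `Bool`, with `true ↦ x`,
`false ↦ y`); `Sum.inl` gives the plain generators, `Sum.inr` the dotted ones. -/
abbrev F := FreeLieAlgebra k (Bool ⊕ Bool)

/-- The idempotent endomorphism `φ` with `φ(x̄) = x̄`, `φ(ȳ) = ȳ`, `φ(ẋ) = x̄`, `φ(ẏ) = ȳ`. -/
noncomputable def phi : F k →ₗ⁅k⁆ F k :=
  FreeLieAlgebra.lift k fun s => FreeLieAlgebra.of k (Sum.inl (Sum.elim id id s))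

lemma phi_of (s : Bool ⊕ Bool) :
    phi k (FreeLieAlgebra.of k s) = FreeLieAlgebra.of k (Sum.inl (Sum.elim id id s)) :=
  congrFun (FreeLieAlgebra.of_comp_lift _) s

/-- `V₂`: the smallest submodule containing the dotted generators and closed under the two
di-algebra operations `a ⊢ b := ⁅φ a, b⁆` and `a ⊣ b := ⁅a, φ b⁆`; it realizes the free Leibniz
algebra on `{x, y}`. -/
noncomputable def V₂ : Submodule k (F k) :=
  sInf {W : Submodule k (F k) |
    (∀ b : Bool, FreeLieAlgebra.of k (Sum.inr b) ∈ W) ∧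
    ∀ a b : F k, a ∈ W → b ∈ W → ⁅phi k a, b⁆ ∈ W ∧ ⁅a, phi k b⁆ ∈ W}

/-- The element `f = ⁅ẋ, ȳ⁆ + ⁅ẏ, x̄⁆ + ẏ`, encoding the relation `[x ⊣ y] + [y ⊣ x] + y`. -/
noncomputable def f : F k :=
  ⁅FreeLieAlgebra.of k (Sum.inr true : Bool ⊕ Bool), FreeLieAlgebra.of k (Sum.inl false : Bool ⊕ Bool)⁆ +
    ⁅FreeLieAlgebra.of k (Sum.inr false : Bool ⊕ Bool), FreeLieAlgebra.of k (Sum.inl true : Bool ⊕ Bool)⁆ +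
    FreeLieAlgebra.of k (Sum.inr false : Bool ⊕ Bool)

/-- `J`: the ideal of the di-algebra `V₂` generated by `f`, i.e. the smallest submodule
containing `f` and closed under the di-algebra products with elements of `V₂`. -/
noncomputable def J : Submodule k (F k) :=
  sInf {J : Submodule k (F k) | f k ∈ J ∧
    ∀ j ∈ J, ∀ v ∈ V₂ k,
      ⁅phi k v, j⁆ ∈ J ∧ ⁅j, phi k v⁆ ∈ J ∧ ⁅v, phi k j⁆ ∈ J ∧ ⁅phi k j, v⁆ ∈ J}

/-- The left-normed words `w₀ = ẋ`, `wₙ₊₁ = ⁅wₙ, x̄⁆`. -/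
noncomputable def w : ℕ → F k
  | 0 => FreeLieAlgebra.of k (Sum.inr true)
  | n + 1 => ⁅w n, FreeLieAlgebra.of k (Sum.inl true)⁆

lemma of_inr_mem_V₂ (b : Bool) : FreeLieAlgebra.of k (Sum.inr b) ∈ V₂ k :=
  Submodule.mem_sInf.2 fun _ hW => hW.1 b

lemma w_mem_V₂ : ∀ n : ℕ, w k n ∈ V₂ k
  | 0 => of_inr_mem_V₂ k true
  | n + 1 => Submodule.mem_sInf.2 fun W hW => by
      have ha : w k n ∈ W := Submodule.mem_sInf.1 (w_mem_V₂ n) W hW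
      have hb : FreeLieAlgebra.of k (Sum.inr true) ∈ W := hW.1 true
      have h := (hW.2 _ _ ha hb).2
      rw [phi_of] at h
      exact h

/-- The images of `ẏ` and the `wₙ` in the quotient `V₂ ⧸ J`. -/
noncomputable def fam : Option ℕ → ↥(V₂ k)
  | none => ⟨FreeLieAlgebra.of k (Sum.inr false), of_inr_mem_V₂ k false⟩
  | some n => ⟨w k n, w_mem_V₂ k n⟩

/-! ### Basic structural lemmas -/

lemma phi_phi (u : F k) : phi k (phi k u) = phi k u := by
  have : (phi k).comp (phi k) = phi k := by
    apply FreeLieAlgebra.hom_ext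
    intro x
    rcases x with b | b <;> simp [phi_of]
  exact congrArg (fun h : F k →ₗ⁅k⁆ F k => h u) this

lemma V₂_closedL {a b : F k} (ha : a ∈ V₂ k) (hb : b ∈ V₂ k) :
    ⁅phi k a, b⁆ ∈ V₂ k :=
  Submodule.mem_sInf.2 fun W hW =>
    ((hW.2 a b (Submodule.mem_sInf.1 ha W hW) (Submodule.mem_sInf.1 hb W hW)).1)

lemma V₂_closedR {a b : F k} (ha : a ∈ V₂ k) (hb : b ∈ V₂ k) :
    ⁅a, phi k b⁆ ∈ V₂ k :=
  Submodule.mem_sInf.2 fun W hW =>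
    ((hW.2 a b (Submodule.mem_sInf.1 ha W hW) (Submodule.mem_sInf.1 hb W hW)).2)

lemma f_mem_V₂ : f k ∈ V₂ k := by
  have hx := of_inr_mem_V₂ k true
  have hy := of_inr_mem_V₂ k false
  have h1 : ⁅FreeLieAlgebra.of k (Sum.inr true : Bool ⊕ Bool),
      phi k (FreeLieAlgebra.of k (Sum.inr false))⁆ ∈ V₂ k := V₂_closedR k hx hy
  have h2 : ⁅FreeLieAlgebra.of k (Sum.inr false : Bool ⊕ Bool),
      phi k (FreeLieAlgebra.of k (Sum.inr true))⁆ ∈ V₂ k := V₂_closedR k hy hx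
  rw [phi_of] at h1 h2
  simp only [Sum.elim_inr, id] at h1 h2
  exact Submodule.add_mem _ (Submodule.add_mem _ h1 h2) hy

lemma f_mem_J : f k ∈ J k := Submodule.mem_sInf.2 fun _ hW => hW.1

lemma J_closed {j v : F k} (hj : j ∈ J k) (hv : v ∈ V₂ k) :
    ⁅phi k v, j⁆ ∈ J k ∧ ⁅j, phi k v⁆ ∈ J k ∧ ⁅v, phi k j⁆ ∈ J k ∧ ⁅phi k j, v⁆ ∈ J k := by
  refine ⟨?_, ?_, ?_, ?_⟩ <;>
    exact Submodule.mem_sInf.2 fun W hW => by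
      have := hW.2 j (Submodule.mem_sInf.1 hj W hW) v hv
      tauto

lemma J_le_V₂ : J k ≤ V₂ k := by
  apply sInf_le
  refine ⟨f_mem_V₂ k, ?_⟩
  intro j hj v hv
  exact ⟨V₂_closedL k hv hj, V₂_closedR k hj hv, V₂_closedR k hv hj, V₂_closedL k hj hv⟩

lemma phi_f : phi k (f k) = FreeLieAlgebra.of k (Sum.inl false : Bool ⊕ Bool) := by
  have h : phi k (f k) =
      ⁅FreeLieAlgebra.of k (Sum.inl true : Bool ⊕ Bool), FreeLieAlgebra.of k (Sum.inl false : Bool ⊕ Bool)⁆ +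
        ⁅FreeLieAlgebra.of k (Sum.inl false : Bool ⊕ Bool), FreeLieAlgebra.of k (Sum.inl true : Bool ⊕ Bool)⁆ +
        FreeLieAlgebra.of k (Sum.inl false : Bool ⊕ Bool) := by
    simp [f, phi_of]
  rw [h, ← lie_skew]
  abel

lemma phi_w_succ : ∀ n : ℕ, phi k (w k (n + 1)) = 0
  | 0 => by simp [w, phi_of]
  | n + 1 => by rw [w, LieHom.map_lie, phi_w_succ n, zero_lie]

lemma phi_w0 : phi k (w k 0) = FreeLieAlgebra.of k (Sum.inl true : Bool ⊕ Bool) := by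
  simp [w, phi_of]

/-! ### The representation used for linear independence -/

attribute [local instance] LieRing.ofAssociativeRing

abbrev M := Option ℕ →₀ k
abbrev E := (Option ℕ →₀ k) × k

noncomputable def D : M k →ₗ[k] M k :=
  Finsupp.lsum k fun o =>
    Option.rec (Finsupp.lsingle none) (fun n => -Finsupp.lsingle (some (n + 1))) o

@[simp] lemma D_none (c : k) : D k (Finsupp.single none c) = Finsupp.single none c := by
  simp [D]
@[simp] lemma D_some (n : ℕ) (c : k) :
    D k (Finsupp.single (some n) c) = -Finsupp.single (some (n+1)) c := by
  simp [D]

noncomputable def Xop : Module.End k (E k) :=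
  (LinearMap.inl k (M k) k).comp ((D k).comp (LinearMap.fst k (M k) k))
noncomputable def eop (m : M k) : Module.End k (E k) :=
  (LinearMap.inl k (M k) k).comp
    ((LinearMap.toSpanSingleton k (M k) m).comp (LinearMap.snd k (M k) k))

@[simp] lemma Xop_apply (v : E k) : Xop k v = (D k v.1, 0) := rfl
@[simp] lemma eop_apply (m : M k) (v : E k) : eop k m v = (v.2 • m, 0) := rfl

noncomputable def g : Bool ⊕ Bool → Module.End k (E k)
  | .inl true => Xop k
  | .inl false => 0
  | .inr true => Xop k + eop k (Finsupp.single (some 0) 1)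
  | .inr false => eop k (Finsupp.single none 1)

@[simp] lemma g_inl_true : g k (Sum.inl true) = Xop k := rfl
@[simp] lemma g_inl_false : g k (Sum.inl false) = 0 := rfl
@[simp] lemma g_inr_true : g k (Sum.inr true) = Xop k + eop k (Finsupp.single (some 0) 1) := rfl
@[simp] lemma g_inr_false : g k (Sum.inr false) = eop k (Finsupp.single none 1) := rfl

noncomputable def ρ : F k →ₗ⁅k⁆ Module.End k (E k) := FreeLieAlgebra.lift k (g k)

@[simp] lemma ρ_of (s : Bool ⊕ Bool) : ρ k (FreeLieAlgebra.of k s) = g k s :=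
  FreeLieAlgebra.lift_of_apply _ _

lemma lift_mem {L : Type*} [LieRing L] [LieAlgebra k L] (K : LieSubalgebra k L)
    (gg : Bool ⊕ Bool → L) (h : ∀ s, gg s ∈ K) (u : F k) :
    FreeLieAlgebra.lift k gg u ∈ K := by
  have : K.incl.comp (FreeLieAlgebra.lift k fun s => (⟨gg s, h s⟩ : K)) =
      FreeLieAlgebra.lift k gg := by
    apply FreeLieAlgebra.hom_ext
    intro x
    simp [FreeLieAlgebra.lift_of_apply]
  rw [← this]
  exact (FreeLieAlgebra.lift k (fun s => (⟨gg s, h s⟩ : K)) u).2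

def P : LieSubalgebra k (Module.End k (E k)) where
  carrier := {A | ∀ v, (A v).2 = 0}
  add_mem' := by intro A B hA hB v; simp [hA v, hB v]
  zero_mem' := by intro v; simp
  smul_mem' := by intro c A hA v; simp [hA v]
  lie_mem' := by
    intro A B hA hB v
    simp only [Set.mem_setOf_eq] at hA hB
    simp [Ring.lie_def, LinearMap.sub_apply, Module.End.mul_apply, hA, hB]

def Q : LieSubalgebra k (Module.End k (E k)) where
  carrier := {A | A ((0 : M k), (1 : k)) = 0}
  add_mem' := by intro A B hA hB; simp only [Set.mem_setOf_eq] at *; simp [hA, hB]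
  zero_mem' := by simp
  smul_mem' := by intro c A hA; simp only [Set.mem_setOf_eq] at *; simp [hA]
  lie_mem' := by
    intro A B hA hB
    simp only [Set.mem_setOf_eq] at *
    simp [Ring.lie_def, LinearMap.sub_apply, Module.End.mul_apply, hA, hB]

lemma rho_snd (u : F k) (v : E k) : (ρ k u v).2 = 0 := by
  have : ρ k u ∈ P k := by
    apply lift_mem k (P k) (g k)
    intro s
    rcases s with b | b <;> cases b <;> intro v <;> simp [g, P]
  exact this v

lemma rho_phi01 (u : F k) : ρ k (phi k u) ((0 : M k), (1 : k)) = 0 := by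
  have h : (ρ k).comp (phi k) =
      FreeLieAlgebra.lift k fun s => g k (Sum.inl (Sum.elim id id s)) := by
    apply FreeLieAlgebra.hom_ext
    intro x
    simp [phi_of, FreeLieAlgebra.lift_of_apply]
  have h2 : ρ k (phi k u) ∈ Q k := by
    have h3 := lift_mem k (Q k) (fun s => g k (Sum.inl (Sum.elim id id s))) ?_ u
    · rw [← h] at h3; exact h3
    · intro s
      rcases s with b | b <;> cases b <;> simp [g, Q, Prod.ext_iff]
  exact h2

noncomputable def θ : Module.End k (E k) →ₗ[k] M k :=
  (LinearMap.fst k (M k) k).comp (LinearMap.applyₗ ((0 : M k), (1 : k)))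

@[simp] lemma θ_apply (A : Module.End k (E k)) : θ k A = (A ((0 : M k), (1:k))).1 := rfl

noncomputable def T : F k →ₗ[k] M k := (θ k).comp ((ρ k) : F k →ₗ[k] Module.End k (E k))

@[simp] lemma T_apply (u : F k) : T k u = (ρ k u ((0 : M k), (1:k))).1 := rfl

lemma rho01 (u : F k) (h : T k u = 0) : ρ k u ((0 : M k), (1 : k)) = 0 :=
  Prod.ext h (rho_snd k u _)

lemma theta_lie (A B : Module.End k (E k)) :
    θ k ⁅A, B⁆ = (A (B ((0:M k),(1:k)))).1 - (B (A ((0:M k),(1:k)))).1 := by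
  simp [Ring.lie_def, LinearMap.sub_apply, Module.End.mul_apply]

/-- `J` is contained in both kernels. -/
lemma J_le_N : J k ≤ LinearMap.ker (T k) ⊓
    LinearMap.ker (((ρ k) : F k →ₗ[k] Module.End k (E k)).comp
      ((phi k) : F k →ₗ[k] F k)) := by
  apply sInf_le
  constructor
  · constructor
    · -- T f = 0
      rw [SetLike.mem_coe, LinearMap.mem_ker]
      show (ρ k (f k) ((0 : M k), (1 : k))).1 = 0
      simp [f, Ring.lie_def, LinearMap.sub_apply, Module.End.mul_apply, LinearMap.add_apply]
    · -- ρ (φ f) = 0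
      rw [SetLike.mem_coe, LinearMap.mem_ker]
      show ρ k (phi k (f k)) = 0
      rw [phi_f]
      simp
  · intro j hj v _hv
    rw [Submodule.mem_inf, LinearMap.mem_ker, LinearMap.mem_ker] at hj
    have hj1 : T k j = 0 := hj.1
    have hj2 : ρ k (phi k j) = 0 := hj.2
    have hj0 : ρ k j ((0 : M k), (1 : k)) = 0 := rho01 k j hj1
    have hv0 : ρ k (phi k v) ((0 : M k), (1 : k)) = 0 := rho_phi01 k v
    refine ⟨⟨?_, ?_⟩, ⟨?_, ?_⟩, ⟨?_, ?_⟩, ⟨?_, ?_⟩⟩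
    · rw [SetLike.mem_coe, LinearMap.mem_ker]
      show θ k (ρ k ⁅phi k v, j⁆) = 0
      rw [LieHom.map_lie, theta_lie, hj0, hv0]; simp
    · rw [SetLike.mem_coe, LinearMap.mem_ker]
      show ρ k (phi k ⁅phi k v, j⁆) = 0
      rw [LieHom.map_lie, LieHom.map_lie, hj2]
      simp [Ring.lie_def]
    · rw [SetLike.mem_coe, LinearMap.mem_ker]
      show θ k (ρ k ⁅j, phi k v⁆) = 0
      rw [LieHom.map_lie, theta_lie, hj0, hv0]; simp
    · rw [SetLike.mem_coe, LinearMap.mem_ker]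
      show ρ k (phi k ⁅j, phi k v⁆) = 0
      rw [LieHom.map_lie, LieHom.map_lie, hj2]
      simp [Ring.lie_def]
    · rw [SetLike.mem_coe, LinearMap.mem_ker]
      show θ k (ρ k ⁅v, phi k j⁆) = 0
      rw [LieHom.map_lie, hj2]
      simp [Ring.lie_def, LinearMap.sub_apply, Module.End.mul_apply]
    · rw [SetLike.mem_coe, LinearMap.mem_ker]
      show ρ k (phi k ⁅v, phi k j⁆) = 0
      rw [LieHom.map_lie, LieHom.map_lie, phi_phi, hj2]
      simp [Ring.lie_def]
    · rw [SetLike.mem_coe, LinearMap.mem_ker]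
      show θ k (ρ k ⁅phi k j, v⁆) = 0
      rw [LieHom.map_lie, hj2]
      simp [Ring.lie_def, LinearMap.sub_apply, Module.End.mul_apply]
    · rw [SetLike.mem_coe, LinearMap.mem_ker]
      show ρ k (phi k ⁅phi k j, v⁆) = 0
      rw [LieHom.map_lie, LieHom.map_lie, phi_phi, hj2]
      simp [Ring.lie_def]

lemma T_y : T k (FreeLieAlgebra.of k (Sum.inr false : Bool ⊕ Bool)) =
    Finsupp.single none 1 := by
  simp

lemma T_w : ∀ n : ℕ, T k (w k n) = Finsupp.single (some n) 1
  | 0 => by simp [w]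
  | n + 1 => by
    have h1 : ρ k (w k n) ((0 : M k), (1:k)) = (Finsupp.single (some n) 1, 0) :=
      Prod.ext (T_w n) (rho_snd k _ _)
    show θ k (ρ k (w k (n+1))) = _
    rw [w, LieHom.map_lie, ρ_of, g_inl_true, theta_lie, h1]
    simp
    exact congrArg Prod.fst ((ρ k (w k n)).map_zero)



/-! ### Spanning -/

noncomputable def famF : Option ℕ → F k := fun o => ((fam k o : F k))
@[simp] lemma famF_none : famF k none = FreeLieAlgebra.of k (Sum.inr false) := rfl
@[simp] lemma famF_some (n : ℕ) : famF k (some n) = w k n := rfl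

noncomputable def Sp : Submodule k (F k) := J k ⊔ Submodule.span k (Set.range (famF k))

lemma span_fam_le_V₂ : Submodule.span k (Set.range (famF k)) ≤ V₂ k := by
  rw [Submodule.span_le]
  rintro _ ⟨o, rfl⟩
  exact (fam k o).2

lemma Sp_le_V₂ : Sp k ≤ V₂ k := sup_le (J_le_V₂ k) (span_fam_le_V₂ k)

lemma lie_y_mem {a : F k} (ha : a ∈ V₂ k) :
    ⁅a, FreeLieAlgebra.of k (Sum.inl false : Bool ⊕ Bool)⁆ ∈ J k := by
  rw [← phi_f]
  exact (J_closed k (f_mem_J k) ha).2.2.1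

lemma ydot_x_mem : ⁅FreeLieAlgebra.of k (Sum.inr false : Bool ⊕ Bool),
    FreeLieAlgebra.of k (Sum.inl true : Bool ⊕ Bool)⁆ +
    FreeLieAlgebra.of k (Sum.inr false : Bool ⊕ Bool) ∈ J k := by
  have h1 : ⁅FreeLieAlgebra.of k (Sum.inr true : Bool ⊕ Bool),
      FreeLieAlgebra.of k (Sum.inl false : Bool ⊕ Bool)⁆ ∈ J k :=
    lie_y_mem k (of_inr_mem_V₂ k true)
  have h2 := Submodule.sub_mem _ (f_mem_J k) h1
  have h3 : f k - ⁅FreeLieAlgebra.of k (Sum.inr true : Bool ⊕ Bool),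
      FreeLieAlgebra.of k (Sum.inl false : Bool ⊕ Bool)⁆ =
      ⁅FreeLieAlgebra.of k (Sum.inr false : Bool ⊕ Bool),
        FreeLieAlgebra.of k (Sum.inl true : Bool ⊕ Bool)⁆ +
        FreeLieAlgebra.of k (Sum.inr false : Bool ⊕ Bool) := by
    rw [f]; abel
  rwa [h3] at h2

lemma lie_x_span {s : F k} (hs : s ∈ Submodule.span k (Set.range (famF k))) :
    ⁅s, FreeLieAlgebra.of k (Sum.inl true : Bool ⊕ Bool)⁆ ∈ Sp k := by
  induction hs using Submodule.span_induction with
  | mem x hx =>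
    obtain ⟨o, rfl⟩ := hx
    match o with
    | none =>
      rw [famF_none]
      have hmem : famF k none ∈ Submodule.span k (Set.range (famF k)) :=
        Submodule.subset_span ⟨none, rfl⟩
      have h4 := Submodule.sub_mem _ (Submodule.mem_sup_left (ydot_x_mem k))
        (Submodule.mem_sup_right hmem : famF k none ∈ Sp k)
      rw [famF_none] at h4
      have h5 : ⁅FreeLieAlgebra.of k (Sum.inr false : Bool ⊕ Bool),
          FreeLieAlgebra.of k (Sum.inl true : Bool ⊕ Bool)⁆ +
          FreeLieAlgebra.of k (Sum.inr false : Bool ⊕ Bool) -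
          FreeLieAlgebra.of k (Sum.inr false : Bool ⊕ Bool) =
          ⁅FreeLieAlgebra.of k (Sum.inr false : Bool ⊕ Bool),
            FreeLieAlgebra.of k (Sum.inl true : Bool ⊕ Bool)⁆ := by abel
      rwa [h5] at h4
    | some n =>
      rw [famF_some]
      exact Submodule.mem_sup_right (Submodule.subset_span ⟨some (n + 1), rfl⟩)
  | zero => rw [zero_lie]; exact Submodule.zero_mem _
  | add x y hx hy ihx ihy => rw [add_lie]; exact Submodule.add_mem _ ihx ihy
  | smul c x hx ihx => rw [smul_lie]; exact Submodule.smul_mem _ _ ihx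

lemma lie_x_mem_Sp {a : F k} (ha : a ∈ Sp k) :
    ⁅a, FreeLieAlgebra.of k (Sum.inl true : Bool ⊕ Bool)⁆ ∈ Sp k := by
  obtain ⟨j, hj, s, hs, rfl⟩ := Submodule.mem_sup.1 ha
  rw [add_lie]
  apply Submodule.add_mem
  · apply Submodule.mem_sup_left
    have := (J_closed k hj (w_mem_V₂ k 0)).2.1
    rwa [phi_w0] at this
  · exact lie_x_span k hs

lemma key1 (o : Option ℕ) {a : F k} (ha : a ∈ Sp k) :
    ⁅a, phi k (famF k o)⁆ ∈ Sp k := by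
  have haV : a ∈ V₂ k := Sp_le_V₂ k ha
  match o with
  | none =>
    have h : phi k (famF k none) = FreeLieAlgebra.of k (Sum.inl false : Bool ⊕ Bool) := by
      rw [famF_none, phi_of]; rfl
    rw [h]
    exact Submodule.mem_sup_left (lie_y_mem k haV)
  | some 0 =>
    rw [famF_some, phi_w0]
    exact lie_x_mem_Sp k ha
  | some (n + 1) =>
    rw [famF_some, phi_w_succ, lie_zero]
    exact Submodule.zero_mem _

lemma key2span {a : F k} (ha : a ∈ Sp k) {s : F k}
    (hs : s ∈ Submodule.span k (Set.range (famF k))) : ⁅a, phi k s⁆ ∈ Sp k := by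
  induction hs using Submodule.span_induction with
  | mem x hx =>
    obtain ⟨o, rfl⟩ := hx
    exact key1 k o ha
  | zero => rw [show phi k 0 = 0 from map_zero (phi k).toLinearMap, lie_zero]; exact Submodule.zero_mem _
  | add x y hx hy ihx ihy =>
    rw [map_add, lie_add]; exact Submodule.add_mem _ ihx ihy
  | smul c x hx ihx =>
    rw [map_smul, lie_smul]; exact Submodule.smul_mem _ _ ihx

lemma key2 {a b : F k} (ha : a ∈ Sp k) (hb : b ∈ Sp k) : ⁅a, phi k b⁆ ∈ Sp k := by
  have haV : a ∈ V₂ k := Sp_le_V₂ k ha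
  obtain ⟨j, hj, s, hs, rfl⟩ := Submodule.mem_sup.1 hb
  rw [map_add, lie_add]
  apply Submodule.add_mem
  · exact Submodule.mem_sup_left ((J_closed k hj haV).2.2.1)
  · exact key2span k ha hs

lemma key3 {a b : F k} (ha : a ∈ Sp k) (hb : b ∈ Sp k) : ⁅phi k a, b⁆ ∈ Sp k := by
  rw [← lie_skew]
  exact Submodule.neg_mem _ (key2 k hb ha)

lemma V₂_le_Sp : V₂ k ≤ Sp k := by
  apply sInf_le
  constructor
  · intro b
    cases b
    · exact Submodule.mem_sup_right (Submodule.subset_span ⟨none, rfl⟩)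
    · exact Submodule.mem_sup_right (Submodule.subset_span ⟨some 0, rfl⟩)
  · intro a b ha hb
    exact ⟨key3 k ha hb, key2 k ha hb⟩

/-! ### Main theorem -/

lemma T_fam (o : Option ℕ) : T k ((fam k o : F k)) = Finsupp.single o 1 := by
  match o with
  | none => exact T_y k
  | some n => exact T_w k n

/-- `J ⊆ V₂`, and the images of `ẏ` together with all the left-normed words `wₙ`
form a `k`-basis of the quotient `V₂ / J`, i.e. of the Leibniz algebra presented by generators
`x, y` and the relation `[x ⊣ y] + [y ⊣ x] + y = 0`. -/
theorem leibniz_quotient_basis :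
    J k ≤ V₂ k ∧
    LinearIndependent k
      (fun o : Option ℕ => Submodule.mkQ ((J k).comap (V₂ k).subtype) (fam k o)) ∧
    Submodule.span k
      (Set.range fun o : Option ℕ =>
        Submodule.mkQ ((J k).comap (V₂ k).subtype) (fam k o)) = ⊤ := by
  set J' : Submodule k (V₂ k) := (J k).comap (V₂ k).subtype with hJ'
  refine ⟨J_le_V₂ k, ?_, ?_⟩
  · -- linear independence
    have hker : J' ≤ LinearMap.ker ((T k).comp (V₂ k).subtype) := by
      intro z hz
      rw [LinearMap.mem_ker, LinearMap.comp_apply]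
      have hzJ : (z : F k) ∈ J k := hz
      exact (Submodule.mem_inf.1 (J_le_N k hzJ)).1
    set Tb : (↥(V₂ k) ⧸ J') →ₗ[k] M k := J'.liftQ ((T k).comp (V₂ k).subtype) hker with hTb
    have hcomp : (⇑Tb ∘ fun o : Option ℕ => J'.mkQ (fam k o)) =
        fun o : Option ℕ => Finsupp.single o (1 : k) := by
      funext o
      show Tb (J'.mkQ (fam k o)) = _
      rw [Submodule.mkQ_apply, Submodule.liftQ_apply, LinearMap.comp_apply]
      exact T_fam k o
    have hsing : LinearIndependent k fun o : Option ℕ => Finsupp.single o (1 : k) := by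
      simpa using (Finsupp.basisSingleOne : Module.Basis (Option ℕ) k (M k)).linearIndependent
    exact LinearIndependent.of_comp Tb (by rw [hcomp]; exact hsing)
  · -- spanning
    have h1 : (Set.range fun o : Option ℕ => J'.mkQ (fam k o)) =
        J'.mkQ '' Set.range (fam k) := by
      rw [← Set.range_comp]; rfl
    rw [h1, ← Submodule.map_span, eq_top_iff]
    rintro q -
    obtain ⟨z, rfl⟩ := J'.mkQ_surjective q
    have hz : (z : F k) ∈ Sp k := V₂_le_Sp k z.2
    obtain ⟨j, hj, s, hs, hzs⟩ := Submodule.mem_sup.1 hz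
    have himg : (V₂ k).subtype '' Set.range (fam k) = Set.range (famF k) := by
      rw [← Set.range_comp]; rfl
    have hs' : s ∈ Submodule.map (V₂ k).subtype (Submodule.span k (Set.range (fam k))) := by
      rw [Submodule.map_span, himg]; exact hs
    obtain ⟨y, hy, hys⟩ := hs'
    have hzy : J'.mkQ z = J'.mkQ y := by
      rw [Submodule.mkQ_apply, Submodule.mkQ_apply, Submodule.Quotient.eq]
      have : ((z - y : V₂ k) : F k) ∈ J k := by
        have : ((z - y : V₂ k) : F k) = (z : F k) - s := by
          rw [← hys]; rfl
        rw [this, ← hzs]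
        simpa using hj
      exact this
    rw [hzy]
    exact Submodule.mem_map_of_mem hy


end Stmt15
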